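/- Let 1 ≤ p < ∞ and Ω = (Ω_n)_{n≥0} ⊂ [0,∞). The functional ‖f‖_{d(Ω,p)} = (Σ_{n=0}^∞ f*(n)^p Ω_n)^{1/p} satisfies the triangle inequality for all complex sequences f only if Ω is nonincreasing; conversely, if Ω is nonincreasing it is a norm. -/

import Mathlib

open MeasureTheory Set
open scoped ENNReal NNReal

/-- Nonincreasing rearrangement of a complex sequence (w.r.t. counting measure on ℕ). -/
noncomputable def rearrSeqC (f : ℕ → ℂ) (n : ℕ) : ℝ≥0∞ :=
  sInf {s : ℝ≥0∞ | Measure.count {k : ℕ | s < ENNReal.ofReal ‖f k‖} ≤ (n : ℝ≥0∞)}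

/-- The Lorentz sequence space functional `‖f‖_{d(Ω,p)} = (Σ f*(n)^p Ωₙ)^{1/p}`. -/
noncomputable def dNormC (Ω : ℕ → ℝ) (p : ℝ) (f : ℕ → ℂ) : ℝ≥0∞ :=
  (∑' n, (rearrSeqC f n) ^ p * ENNReal.ofReal (Ω n)) ^ (1 / p)

noncomputable def rearrE (a : ℕ → ℝ≥0∞) (n : ℕ) : ℝ≥0∞ :=
  sInf {s : ℝ≥0∞ | Measure.count {k : ℕ | s < a k} ≤ (n : ℝ≥0∞)}

lemma rearrE_le {a : ℕ → ℝ≥0∞} {n : ℕ} {s : ℝ≥0∞}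
    (h : Measure.count {k : ℕ | s < a k} ≤ (n : ℝ≥0∞)) : rearrE a n ≤ s := sInf_le h

lemma lt_count_of_lt_rearrE {a : ℕ → ℝ≥0∞} {n : ℕ} {s : ℝ≥0∞} (h : s < rearrE a n) :
    (n : ℝ≥0∞) < Measure.count {k : ℕ | s < a k} := by
  by_contra hc
  exact absurd (rearrE_le (not_lt.1 hc)) (not_le.2 h)

lemma rearrE_antitone (a : ℕ → ℝ≥0∞) : Antitone (rearrE a) := by
  intro n m hnm
  refine sInf_le_sInf (fun s hs => ?_)
  simp only [Set.mem_setOf_eq] at hs ⊢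
  exact le_trans hs (by exact_mod_cast Nat.cast_le.2 hnm)

lemma rearrE_comp_le {π : ℕ → ℕ} (hπ : Function.Injective π) (a : ℕ → ℝ≥0∞) (n : ℕ) :
    rearrE (a ∘ π) n ≤ rearrE a n := by
  refine sInf_le_sInf (fun s hs => ?_)
  simp only [Set.mem_setOf_eq] at hs ⊢
  refine le_trans ?_ hs
  have h1 : Measure.count {k : ℕ | s < (a ∘ π) k} =
      Measure.count (π '' {k : ℕ | s < (a ∘ π) k}) :=
    (Measure.count_injective_image hπ _).symm
  rw [h1]
  exact measure_mono (by rintro x ⟨k, hk, rfl⟩; exact hk)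

lemma rearrE_orderIso (e : ℝ≥0∞ ≃o ℝ≥0∞) (a : ℕ → ℝ≥0∞) (n : ℕ) :
    rearrE (fun k => e (a k)) n = e (rearrE a n) := by
  have hset : {s : ℝ≥0∞ | Measure.count {k : ℕ | s < e (a k)} ≤ (n : ℝ≥0∞)} =
      e '' {s : ℝ≥0∞ | Measure.count {k : ℕ | s < a k} ≤ (n : ℝ≥0∞)} := by
    ext s
    constructor
    · intro hs
      refine ⟨e.symm s, ?_, e.apply_symm_apply s⟩
      have : {k : ℕ | e.symm s < a k} = {k : ℕ | s < e (a k)} := by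
        ext k
        simp only [Set.mem_setOf_eq]
        rw [← e.lt_iff_lt, e.apply_symm_apply]
      simpa [this] using hs
    · rintro ⟨u, hu, rfl⟩
      have : {k : ℕ | e u < e (a k)} = {k : ℕ | u < a k} := by
        ext k; simp [e.lt_iff_lt]
      simpa [this] using hu
  rw [rearrE, hset, sInf_image]
  rw [rearrE, e.map_sInf]

lemma rearrE_rpow (a : ℕ → ℝ≥0∞) {p : ℝ} (hp : 0 < p) (n : ℕ) :
    rearrE (fun k => a k ^ p) n = rearrE a n ^ p := by
  have := rearrE_orderIso (ENNReal.orderIsoRpow p hp) a n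
  simpa [ENNReal.orderIsoRpow, StrictMono.orderIsoOfRightInverse] using this

lemma card_le_count {F : Finset ℕ} {S : Set ℕ} (h : ↑F ⊆ S) :
    (F.card : ℝ≥0∞) ≤ Measure.count S := by
  rw [← Measure.count_apply_finset]
  exact measure_mono h

lemma min_le_rearrE {b : ℕ → ℝ≥0∞} {F : Finset ℕ} {k0 : ℕ} (hk0 : k0 ∈ F)
    (hmin : ∀ k ∈ F, b k0 ≤ b k) : b k0 ≤ rearrE b (F.card - 1) := by
  refine le_sInf fun s hs => ?_
  simp only [Set.mem_setOf_eq] at hs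
  by_contra h
  push_neg at h
  have hsub : ↑F ⊆ {k : ℕ | s < b k} := fun k hk => lt_of_lt_of_le h (hmin k hk)
  have h1 : (F.card : ℝ≥0∞) ≤ ((F.card - 1 : ℕ) : ℝ≥0∞) := le_trans (card_le_count hsub) hs
  have h2 : F.card ≤ F.card - 1 := by exact_mod_cast h1
  have h3 : 1 ≤ F.card := Finset.card_pos.2 ⟨k0, hk0⟩
  omega

lemma sum_le_sum_rearrE (b : ℕ → ℝ≥0∞) (F : Finset ℕ) :
    ∑ k ∈ F, b k ≤ ∑ j ∈ Finset.range F.card, rearrE b j := by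
  induction F using Finset.strongInduction with
  | _ F ih =>
    rcases F.eq_empty_or_nonempty with rfl | hne
    · simp
    obtain ⟨k0, hk0, hmin⟩ := F.exists_min_image b hne
    have hcard : F.card - 1 + 1 = F.card := Nat.succ_pred_eq_of_pos (Finset.card_pos.2 hne)
    have hce : (F.erase k0).card = F.card - 1 := Finset.card_erase_of_mem hk0
    calc ∑ k ∈ F, b k = ∑ k ∈ F.erase k0, b k + b k0 := (Finset.sum_erase_add F b hk0).symm
      _ ≤ ∑ j ∈ Finset.range (F.card - 1), rearrE b j + rearrE b (F.card - 1) := by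
          refine add_le_add ?_ (min_le_rearrE hk0 hmin)
          rw [← hce]
          exact ih _ (Finset.erase_ssubset hk0)
      _ = ∑ j ∈ Finset.range F.card, rearrE b j := by
          rw [← hcard, Finset.sum_range_succ, hcard]

section Abel

variable {w : ℕ → ℝ≥0∞}

lemma w_decomp (hw : Antitone w) (hfin : ∀ n, w n ≠ ∞) (n : ℕ) :
    w n = (⨅ m, w m) + ∑' m, (if n ≤ m then w m - w (m + 1) else 0) := by
  set d : ℕ → ℝ≥0∞ := fun m => w m - w (m + 1) with hd
  set S : ℕ → ℝ≥0∞ := fun M => ∑ m ∈ Finset.range M, (if n ≤ m then d m else 0) with hS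
  have hSmono : Monotone S := fun M M' h =>
    Finset.sum_le_sum_of_subset (Finset.range_subset_range.2 h)
  have hstep : ∀ M, S (n + M) = w n - w (n + M) := by
    intro M
    induction M with
    | zero =>
      simp only [Nat.add_zero, tsub_self]
      refine Finset.sum_eq_zero fun m hm => if_neg ?_
      have := Finset.mem_range.1 hm
      omega
    | succ M ihM =>
      rw [show n + (M + 1) = (n + M) + 1 by ring]
      show ∑ m ∈ Finset.range ((n + M) + 1), (if n ≤ m then d m else 0) = _
      rw [Finset.sum_range_succ, if_pos (by omega)]
      have hS' : (∑ x ∈ Finset.range (n + M), if n ≤ x then d x else 0) = w n - w (n + M) := ihM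
      rw [hS']
      exact tsub_add_tsub_cancel (hw (by omega)) (hw (by omega))
  have h2 : ∑' m, (if n ≤ m then d m else 0) = ⨆ M, S M := ENNReal.tsum_eq_iSup_nat
  have h3 : (⨆ M, S M) = ⨆ M, S (n + M) := by
    apply le_antisymm
    · exact iSup_le fun M => le_trans (hSmono (by omega : M ≤ n + M)) (le_iSup (fun M => S (n + M)) M)
    · exact iSup_comp_le _ _
  have h4 : (⨅ M, w (n + M)) = ⨅ m, w m := by
    apply le_antisymm
    · exact le_iInf fun m => iInf_le_of_le m (hw (by omega))
    · exact le_iInf fun M => iInf_le _ (n + M)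
  have h5 : (⨆ M, S (n + M)) = w n - ⨅ m, w m := by
    simp only [hstep]
    rw [← h4, ENNReal.sub_iInf]
  rw [h2, h3, h5]
  exact (add_tsub_cancel_of_le (iInf_le w n)).symm

lemma abel (hw : Antitone w) (hfin : ∀ n, w n ≠ ∞) (x : ℕ → ℝ≥0∞) :
    ∑' n, x n * w n = (⨅ m, w m) * ∑' n, x n
      + ∑' m, (w m - w (m + 1)) * ∑ n ∈ Finset.range (m + 1), x n := by
  set d : ℕ → ℝ≥0∞ := fun m => w m - w (m + 1) with hd
  have h1 : ∀ n, x n * w n = x n * (⨅ m, w m) + ∑' m, (if n ≤ m then x n * d m else 0) := by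
    intro n
    rw [w_decomp hw hfin n, mul_add]
    congr 1
    rw [← ENNReal.tsum_mul_left]
    congr 1
    ext m
    by_cases h : n ≤ m <;> simp [h, hd]
  calc ∑' n, x n * w n
      = ∑' n, (x n * (⨅ m, w m) + ∑' m, (if n ≤ m then x n * d m else 0)) := by
        exact tsum_congr h1
    _ = ∑' n, x n * (⨅ m, w m) + ∑' n, ∑' m, (if n ≤ m then x n * d m else 0) :=
        ENNReal.tsum_add
    _ = (⨅ m, w m) * ∑' n, x n + ∑' m, d m * ∑ n ∈ Finset.range (m + 1), x n := by
        congr 1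
        · rw [ENNReal.tsum_mul_right, mul_comm]
        · rw [ENNReal.tsum_comm]
          congr 1
          ext m
          have : ∑' n, (if n ≤ m then x n * d m else 0)
              = ∑ n ∈ Finset.range (m + 1), (if n ≤ m then x n * d m else 0) := by
            refine tsum_eq_sum fun n hn => ?_
            rw [if_neg]
            exact fun h => hn (Finset.mem_range.2 (by omega))
          rw [this, Finset.mul_sum]
          refine Finset.sum_congr rfl fun n hn => ?_
          have hnm : n ≤ m := Nat.lt_succ_iff.1 (Finset.mem_range.1 hn)
          rw [if_pos hnm, mul_comm]

lemma tsum_mul_le_tsum_rearrE_mul (hw : Antitone w) (hfin : ∀ n, w n ≠ ∞) (b : ℕ → ℝ≥0∞) :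
    ∑' n, b n * w n ≤ ∑' n, rearrE b n * w n := by
  rw [abel hw hfin b, abel hw hfin (rearrE b)]
  have htot : ∑' n, b n ≤ ∑' n, rearrE b n := by
    rw [ENNReal.tsum_eq_iSup_sum]
    refine iSup_le fun F => le_trans (sum_le_sum_rearrE b F) (ENNReal.sum_le_tsum _)
  refine add_le_add (mul_le_mul_right htot _) (ENNReal.tsum_le_tsum fun m => ?_)
  refine mul_le_mul_right ?_ _
  have := sum_le_sum_rearrE b (Finset.range (m + 1))
  rwa [Finset.card_range] at this

end Abel

lemma exists_injOn_mem {A : ℕ → Set ℕ} (hA : ∀ i j, i ≤ j → A i ⊆ A j) :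
    ∀ N : ℕ, (∀ j, j < N → (j : ℝ≥0∞) < Measure.count (A j)) →
    ∃ k : ℕ → ℕ, Set.InjOn k (Set.Iio N) ∧ ∀ j, j < N → k j ∈ A j := by
  intro N
  induction N with
  | zero => exact fun _ => ⟨id, fun a ha b hb h => h, fun j hj => absurd hj (by omega)⟩
  | succ N ih =>
    intro h
    obtain ⟨k, hinj, hmem⟩ := ih fun j hj => h j (by omega)
    have hne : (A N \ ↑((Finset.range N).image k)).Nonempty := by
      by_contra hemp
      rw [Set.not_nonempty_iff_eq_empty, Set.diff_eq_empty] at hemp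
      have h1 : Measure.count (A N) ≤ (((Finset.range N).image k).card : ℝ≥0∞) := by
        rw [← Measure.count_apply_finset]
        exact measure_mono hemp
      have h2 : ((Finset.range N).image k).card ≤ N := le_trans
        (Finset.card_image_le) (by simp)
      have h3 : Measure.count (A N) ≤ (N : ℝ≥0∞) :=
        le_trans h1 (by exact_mod_cast h2)
      exact absurd (h N (by omega)) (not_lt.2 h3)
    obtain ⟨x, hxA, hx⟩ := hne
    refine ⟨Function.update k N x, ?_, ?_⟩
    · intro i hi j hj hij
      simp only [Set.mem_Iio] at hi hj
      rcases Nat.lt_succ_iff_lt_or_eq.1 hi with hi' | rfl <;>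
        rcases Nat.lt_succ_iff_lt_or_eq.1 hj with hj' | rfl
      · rw [Function.update_of_ne (by omega), Function.update_of_ne (by omega)] at hij
        exact hinj hi' hj' hij
      · rw [Function.update_of_ne (by omega), Function.update_self] at hij
        exact (hx (Finset.mem_coe.2 (Finset.mem_image.2 ⟨i, Finset.mem_range.2 hi', hij⟩))).elim
      · rw [Function.update_self, Function.update_of_ne (by omega)] at hij
        exact (hx (Finset.mem_coe.2 (Finset.mem_image.2 ⟨j, Finset.mem_range.2 hj', hij.symm⟩))).elim
      · rfl
    · intro j hj
      rcases Nat.lt_succ_iff_lt_or_eq.1 hj with hj' | rfl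
      · rw [Function.update_of_ne (by omega)]
        exact hmem j hj'
      · rw [Function.update_self]
        exact hxA

theorem rearrE_tsum_eq_iSup {w : ℕ → ℝ≥0∞} (hw : Antitone w) (hfin : ∀ n, w n ≠ ∞)
    (a : ℕ → ℝ≥0∞) :
    ∑' n, rearrE a n * w n = ⨆ π : ℕ ↪ ℕ, ∑' n, a (π n) * w n := by
  apply le_antisymm
  · -- hard direction
    rw [ENNReal.tsum_eq_iSup_nat]
    refine iSup_le fun N => ?_
    set Y := ⨆ π : ℕ ↪ ℕ, ∑' n, a (π n) * w n with hY
    set r := rearrE a with hr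
    by_cases hinfc : ∃ j, j < N ∧ w j ≠ 0 ∧ r j = ∞
    · obtain ⟨j, hjN, hwj, hrj⟩ := hinfc
      suffices hYtop : Y = ∞ by rw [hYtop]; exact le_top
      have hw0 : w 0 ≠ 0 := by
        intro h0
        exact hwj (le_antisymm (h0 ▸ hw (Nat.zero_le j)) (zero_le))
      have hM : ∀ M : ℕ, ∃ k, (M : ℝ≥0∞) < a k := by
        intro M
        have hlt : (j : ℝ≥0∞) < Measure.count {k : ℕ | (M : ℝ≥0∞) < a k} :=
          lt_count_of_lt_rearrE (show (M : ℝ≥0∞) < rearrE a j by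
            rw [← hr, hrj]; exact ENNReal.natCast_lt_top M)
        by_contra hc
        push_neg at hc
        have : {k : ℕ | (M : ℝ≥0∞) < a k} = ∅ := by
          ext k; simp only [Set.mem_setOf_eq, Set.mem_empty_iff_false, iff_false, not_lt]
          exact hc k
        rw [this] at hlt
        simp at hlt
      have hbound : ∀ M : ℕ, (M : ℝ≥0∞) * w 0 ≤ Y := by
        intro M
        obtain ⟨k, hk⟩ := hM M
        refine le_trans ?_ (le_iSup _ (Equiv.swap 0 k).toEmbedding)
        have h0 : a ((Equiv.swap 0 k).toEmbedding 0) = a k := by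
          simp [Equiv.swap_apply_left]
        calc (M : ℝ≥0∞) * w 0 ≤ a ((Equiv.swap 0 k).toEmbedding 0) * w 0 := by
              rw [h0]; exact mul_le_mul_left hk.le _
          _ ≤ ∑' n, a ((Equiv.swap 0 k).toEmbedding n) * w n := ENNReal.le_tsum 0
      have : ∞ ≤ Y := by
        have h1 : (⨆ M : ℕ, (M : ℝ≥0∞) * w 0) = ∞ := by
          rw [← ENNReal.iSup_mul, ENNReal.iSup_natCast, ENNReal.top_mul hw0]
        rw [← h1]
        exact iSup_le hbound
      exact top_le_iff.1 this
    · push_neg at hinfc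
      refine ENNReal.le_of_forall_lt_one_mul_le fun θ hθ => ?_
      rw [Finset.mul_sum]
      set A : ℕ → Set ℕ := fun j =>
        if w j = 0 ∨ r j = 0 then Set.univ else {k : ℕ | θ * r j < a k} with hA
      have hmono : ∀ i j, i ≤ j → A i ⊆ A j := by
        intro i j hij
        by_cases hj : w j = 0 ∨ r j = 0
        · rw [hA]; simp only [hj, if_true]; exact fun x _ => Set.mem_univ x
        · push_neg at hj
          have hi : ¬(w i = 0 ∨ r i = 0) := by
            push_neg
            constructor
            · intro h0; exact hj.1 (le_antisymm (h0 ▸ hw hij) (zero_le))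
            · intro h0; exact hj.2 (le_antisymm (h0 ▸ rearrE_antitone a hij) (zero_le))
          rw [hA]
          simp only [if_neg (not_or.2 ⟨hj.1, hj.2⟩), if_neg hi]
          intro x hx
          simp only [Set.mem_setOf_eq] at hx ⊢
          exact lt_of_le_of_lt (mul_le_mul_right (rearrE_antitone a hij) θ) hx
      have hcount : ∀ j, j < N → (j : ℝ≥0∞) < Measure.count (A j) := by
        intro j hjN
        by_cases hj : w j = 0 ∨ r j = 0
        · rw [hA]; simp only [hj, if_true]
          rw [Measure.count_apply_infinite Set.infinite_univ]
          exact ENNReal.natCast_lt_top j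
        · push_neg at hj
          rw [hA]; simp only [if_neg (not_or.2 ⟨hj.1, hj.2⟩)]
          refine lt_count_of_lt_rearrE ?_
          have hrfin : r j ≠ ∞ := hinfc j hjN hj.1
          calc θ * r j < 1 * r j := by
                rw [ENNReal.mul_lt_mul_iff_left hj.2 hrfin]; exact hθ
            _ = r j := one_mul _
      obtain ⟨k, hinj, hmem⟩ := exists_injOn_mem hmono N hcount
      -- build the embedding
      set m := ((Finset.range N).image k).sup id + 1 with hm
      have hkm : ∀ j, j < N → k j < m := by
        intro j hj
        have : k j ≤ ((Finset.range N).image k).sup id :=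
          Finset.le_sup (f := id) (Finset.mem_image.2 ⟨j, Finset.mem_range.2 hj, rfl⟩)
        omega
      set π : ℕ → ℕ := fun j => if j < N then k j else m + j with hπ
      have hπinj : Function.Injective π := by
        intro i j hij
        rw [hπ] at hij
        simp only at hij
        by_cases hi : i < N <;> by_cases hj : j < N
        · rw [if_pos hi, if_pos hj] at hij
          exact hinj hi hj hij
        · rw [if_pos hi, if_neg hj] at hij
          have := hkm i hi; omega
        · rw [if_neg hi, if_pos hj] at hij
          have := hkm j hj; omega
        · rw [if_neg hi, if_neg hj] at hij; omega
      refine le_trans ?_ (le_iSup _ ⟨π, hπinj⟩)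
      refine le_trans ?_ (ENNReal.sum_le_tsum (f := fun n => a (π n) * w n) (Finset.range N))
      refine Finset.sum_le_sum fun j hj => ?_
      have hjN : j < N := Finset.mem_range.1 hj
      have hπj : π j = k j := by rw [hπ]; simp only [if_pos hjN]
      by_cases hcase : w j = 0 ∨ r j = 0
      · rcases hcase with h0 | h0 <;> simp [h0]
      · push_neg at hcase
        have hmemj := hmem j hjN
        rw [hA] at hmemj
        simp only [if_neg (not_or.2 ⟨hcase.1, hcase.2⟩), Set.mem_setOf_eq] at hmemj
        calc θ * (r j * w j) = (θ * r j) * w j := by ring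
          _ ≤ a (k j) * w j := mul_le_mul_left hmemj.le _
          _ = a (π j) * w j := by rw [hπj]
  · refine iSup_le fun π => ?_
    refine le_trans (tsum_mul_le_tsum_rearrE_mul hw hfin (a ∘ π)) ?_
    exact ENNReal.tsum_le_tsum fun n => mul_le_mul_left (rearrE_comp_le π.injective a n) _

noncomputable def rearrSeqC' (f : ℕ → ℂ) (n : ℕ) : ℝ≥0∞ :=
  sInf {s : ℝ≥0∞ | Measure.count {k : ℕ | s < ENNReal.ofReal ‖f k‖} ≤ (n : ℝ≥0∞)}

lemma rearrSeqC'_eq (f : ℕ → ℂ) : rearrSeqC' f = rearrE (fun k => ENNReal.ofReal ‖f k‖) := rfl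

noncomputable def dNormC' (Ω : ℕ → ℝ) (p : ℝ) (f : ℕ → ℂ) : ℝ≥0∞ :=
  (∑' n, (rearrSeqC' f n) ^ p * ENNReal.ofReal (Ω n)) ^ (1 / p)

section norme

variable {p : ℝ} {Ω : ℕ → ℝ}

lemma dNormC'_eq_iSup (hp : 1 ≤ p) (hmono : ∀ n, Ω (n + 1) ≤ Ω n) (f : ℕ → ℂ) :
    dNormC' Ω p f = ⨆ π : ℕ ↪ ℕ,
      (∑' n, ENNReal.ofReal ‖f (π n)‖ ^ p * ENNReal.ofReal (Ω n)) ^ (1 / p) := by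
  have hp0 : 0 < p := lt_of_lt_of_le one_pos hp
  have hw : Antitone fun n => ENNReal.ofReal (Ω n) :=
    antitone_nat_of_succ_le fun n => ENNReal.ofReal_le_ofReal (hmono n)
  have hfin : ∀ n, ENNReal.ofReal (Ω n) ≠ ∞ := fun n => ENNReal.ofReal_ne_top
  have h1 : ∀ n, rearrSeqC' f n ^ p
      = rearrE (fun k => ENNReal.ofReal ‖f k‖ ^ p) n := by
    intro n
    rw [rearrSeqC'_eq, rearrE_rpow _ hp0]
  rw [dNormC']
  simp_rw [h1]
  rw [rearrE_tsum_eq_iSup hw hfin]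
  exact (ENNReal.orderIsoRpow (1 / p) (by positivity)).map_iSup _

lemma tsum_Lp_add (hp : 1 ≤ p) (x y : ℕ → ℝ≥0∞) :
    (∑' n, (x n + y n) ^ p) ^ (1 / p)
      ≤ (∑' n, x n ^ p) ^ (1 / p) + (∑' n, y n ^ p) ^ (1 / p) := by
  have hp0 : 0 < p := lt_of_lt_of_le one_pos hp
  rw [show (∑' n, (x n + y n) ^ p) = ⨆ F : Finset ℕ, ∑ n ∈ F, (x n + y n) ^ p from
    ENNReal.tsum_eq_iSup_sum]
  have hiso : (⨆ F : Finset ℕ, ∑ n ∈ F, (x n + y n) ^ p) ^ (1 / p)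
      = ⨆ F : Finset ℕ, (∑ n ∈ F, (x n + y n) ^ p) ^ (1 / p) :=
    (ENNReal.orderIsoRpow (1 / p) (by positivity)).map_iSup _
  rw [hiso]
  refine iSup_le fun F => ?_
  show (∑ n ∈ F, (x n + y n) ^ p) ^ (1 / p) ≤ _
  refine le_trans (ENNReal.Lp_add_le F x y hp) (add_le_add ?_ ?_) <;>
    exact ENNReal.rpow_le_rpow (ENNReal.sum_le_tsum F) (by positivity)

lemma dNormC'_triangle (hp : 1 ≤ p) (hmono : ∀ n, Ω (n + 1) ≤ Ω n) (f g : ℕ → ℂ) :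
    dNormC' Ω p (f + g) ≤ dNormC' Ω p f + dNormC' Ω p g := by
  have hp0 : 0 < p := lt_of_lt_of_le one_pos hp
  rw [dNormC'_eq_iSup hp hmono, dNormC'_eq_iSup hp hmono, dNormC'_eq_iSup hp hmono]
  refine iSup_le fun π => ?_
  refine le_trans ?_ (add_le_add (le_iSup _ π) (le_iSup _ π))
  set c : ℕ → ℝ≥0∞ := fun n => ENNReal.ofReal (Ω n) ^ (1 / p) with hc
  have hcp : ∀ n, c n ^ p = ENNReal.ofReal (Ω n) := by
    intro n
    rw [hc, ← ENNReal.rpow_mul, one_div_mul_cancel hp0.ne', ENNReal.rpow_one]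
  have hkey : ∀ (h : ℕ → ℂ),
      (∑' n, ENNReal.ofReal ‖h (π n)‖ ^ p * ENNReal.ofReal (Ω n)) ^ (1 / p)
        = (∑' n, (ENNReal.ofReal ‖h (π n)‖ * c n) ^ p) ^ (1 / p) := by
    intro h
    congr 1
    refine tsum_congr fun n => ?_
    rw [ENNReal.mul_rpow_of_nonneg _ _ hp0.le, hcp]
  rw [hkey f, hkey g, hkey (f + g)]
  refine le_trans ?_ (tsum_Lp_add hp (fun n => ENNReal.ofReal ‖f (π n)‖ * c n)
    (fun n => ENNReal.ofReal ‖g (π n)‖ * c n))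
  refine ENNReal.rpow_le_rpow (ENNReal.tsum_le_tsum fun n => ?_) (by positivity)
  refine ENNReal.rpow_le_rpow ?_ hp0.le
  rw [← add_mul]
  refine mul_le_mul_left ?_ _
  refine le_trans (ENNReal.ofReal_le_ofReal (norm_add_le _ _)) ?_
  exact ENNReal.ofReal_add_le

lemma rearrSeqC'_smul (c : ℂ) (hc : c ≠ 0) (f : ℕ → ℂ) (n : ℕ) :
    rearrSeqC' (c • f) n = ENNReal.ofReal ‖c‖ * rearrSeqC' f n := by
  set C : ℝ≥0∞ := ENNReal.ofReal ‖c‖ with hC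
  have hC0 : C ≠ 0 := by
    rw [hC]
    simp [ENNReal.ofReal_eq_zero, not_le, norm_pos_iff, hc]
  have hCt : C ≠ ∞ := ENNReal.ofReal_ne_top
  let e : ℝ≥0∞ ≃o ℝ≥0∞ :=
    { toFun := fun x => C * x
      invFun := fun x => x / C
      left_inv := fun x => by
        show C * x / C = x
        rw [mul_comm, mul_div_assoc, ENNReal.div_self hC0 hCt, mul_one]
      right_inv := fun x => ENNReal.mul_div_cancel hC0 hCt
      map_rel_iff' := by
        intro x y
        exact ENNReal.mul_le_mul_iff_right hC0 hCt }
  have h1 : ∀ k, ENNReal.ofReal ‖(c • f) k‖ = e (ENNReal.ofReal ‖f k‖) := by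
    intro k
    show ENNReal.ofReal ‖c * f k‖ = C * ENNReal.ofReal ‖f k‖
    rw [norm_mul, ENNReal.ofReal_mul (norm_nonneg c), hC]
  rw [rearrSeqC'_eq]
  calc rearrE (fun k => ENNReal.ofReal ‖(c • f) k‖) n
      = rearrE (fun k => e (ENNReal.ofReal ‖f k‖)) n := by simp_rw [h1]
    _ = e (rearrE (fun k => ENNReal.ofReal ‖f k‖) n) := rearrE_orderIso e _ n
    _ = C * rearrSeqC' f n := rfl

lemma dNormC'_smul (hp : 1 ≤ p) (f : ℕ → ℂ) (c : ℂ) :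
    dNormC' Ω p (c • f) = ENNReal.ofReal ‖c‖ * dNormC' Ω p f := by
  have hp0 : 0 < p := lt_of_lt_of_le one_pos hp
  rcases eq_or_ne c 0 with rfl | hc
  · have hz : ∀ n, rearrSeqC' ((0 : ℂ) • f) n = 0 := by
      intro n
      rw [zero_smul]
      refine le_antisymm ?_ (zero_le)
      refine rearrE_le ?_
      have : {k : ℕ | (0 : ℝ≥0∞) < ENNReal.ofReal ‖(0 : ℕ → ℂ) k‖} = ∅ := by
        ext k; simp
      rw [this]
      simp
    rw [dNormC']
    simp_rw [hz]
    simp only [ENNReal.zero_rpow_of_pos hp0, zero_mul, tsum_zero]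
    rw [ENNReal.zero_rpow_of_pos (by positivity : (0:ℝ) < 1 / p)]
    simp
  · rw [dNormC', dNormC']
    have : ∀ n, rearrSeqC' (c • f) n ^ p * ENNReal.ofReal (Ω n)
        = ENNReal.ofReal ‖c‖ ^ p * (rearrSeqC' f n ^ p * ENNReal.ofReal (Ω n)) := by
      intro n
      rw [rearrSeqC'_smul c hc, ENNReal.mul_rpow_of_nonneg _ _ hp0.le]
      ring
    simp_rw [this]
    rw [ENNReal.tsum_mul_left, ENNReal.mul_rpow_of_nonneg _ _ (by positivity : (0:ℝ) ≤ 1/p),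
      ← ENNReal.rpow_mul, mul_one_div_cancel hp0.ne', ENNReal.rpow_one]

end norme

lemma rearrE_eq_of {a : ℕ → ℝ≥0∞} {n : ℕ} {v : ℝ≥0∞}
    (h1 : Measure.count {k : ℕ | v < a k} ≤ (n : ℝ≥0∞))
    (h2 : ∀ s, s < v → (n : ℝ≥0∞) < Measure.count {k : ℕ | s < a k}) :
    rearrE a n = v := by
  refine le_antisymm (rearrE_le h1) (le_sInf fun s hs => ?_)
  simp only [Set.mem_setOf_eq] at hs
  by_contra h
  push_neg at h
  exact absurd hs (not_le.2 (h2 s h))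

lemma count_Iio (m : ℕ) : Measure.count (Set.Iio m : Set ℕ) = m := by
  have : (Set.Iio m : Set ℕ) = ↑(Finset.range m) := by ext k; simp
  rw [this, Measure.count_apply_finset]
  simp

lemma rearrE_two_block {a : ℕ → ℝ≥0∞} {u v : ℝ≥0∞} {m r : ℕ}
    (huv : v ≤ u) (hv : 0 < v)
    (hc : ∀ s : ℝ≥0∞, Measure.count {k : ℕ | s < a k}
        = if s < v then ((m + r : ℕ) : ℝ≥0∞) else if s < u then ((m : ℕ) : ℝ≥0∞) else 0) :
    (∀ j, j < m → rearrE a j = u) ∧ (∀ j, m ≤ j → j < m + r → rearrE a j = v) ∧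
      ∀ j, m + r ≤ j → rearrE a j = 0 := by
  refine ⟨?_, ?_, ?_⟩
  · intro j hj
    refine rearrE_eq_of ?_ ?_
    · rw [hc u, if_neg (not_lt.2 huv), if_neg (lt_irrefl u)]
      exact zero_le
    · intro s hs
      rw [hc s]
      by_cases h : s < v
      · rw [if_pos h]
        exact Nat.cast_lt.2 (by omega)
      · rw [if_neg h, if_pos hs]
        exact_mod_cast Nat.cast_lt.2 hj
  · intro j hj1 hj2
    refine rearrE_eq_of ?_ ?_
    · rw [hc v, if_neg (lt_irrefl v)]
      by_cases h : v < u
      · rw [if_pos h]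
        exact_mod_cast Nat.cast_le.2 hj1
      · rw [if_neg h]
        exact zero_le
    · intro s hs
      rw [hc s, if_pos hs]
      exact_mod_cast Nat.cast_lt.2 hj2
  · intro j hj
    refine rearrE_eq_of ?_ ?_
    · rw [hc 0, if_pos hv]
      exact_mod_cast Nat.cast_le.2 hj
    · intro s hs
      exact absurd hs (not_lt.2 (zero_le (a := s)))

section tests

variable {p : ℝ} {Ω : ℕ → ℝ} {t : ℝ} {n : ℕ}

/-- the test sequence `f = (1,…,1,t,0,…)` with `n+1` ones. -/
noncomputable def testF (t : ℝ) (n : ℕ) : ℕ → ℂ :=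
  fun k => if k ≤ n then 1 else if k = n + 1 then (t : ℂ) else 0

/-- the test sequence `g = (t,1,…,1,0,…)` with `n+1` ones. -/
noncomputable def testG (t : ℝ) (n : ℕ) : ℕ → ℂ :=
  fun k => if k = 0 then (t : ℂ) else if k ≤ n + 1 then 1 else 0

lemma testF_norm (ht0 : 0 < t) (k : ℕ) :
    ENNReal.ofReal ‖testF t n k‖
      = if k ≤ n then 1 else if k = n + 1 then ENNReal.ofReal t else 0 := by
  by_cases h1 : k ≤ n
  · simp [testF, h1]
  · by_cases h2 : k = n + 1
    · simp [testF, h1, h2, Complex.norm_real, abs_of_pos ht0]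
    · simp [testF, h1, h2]

lemma testG_norm (ht0 : 0 < t) (k : ℕ) :
    ENNReal.ofReal ‖testG t n k‖
      = if k = 0 then ENNReal.ofReal t else if k ≤ n + 1 then 1 else 0 := by
  by_cases h1 : k = 0
  · simp [testG, h1, Complex.norm_real, abs_of_pos ht0]
  · by_cases h2 : k ≤ n + 1
    · simp [testG, h1, h2]
    · simp [testG, h1, h2]

lemma testFG_norm (ht0 : 0 < t) (k : ℕ) :
    ENNReal.ofReal ‖(testF t n + testG t n) k‖
      = if k = 0 then ENNReal.ofReal (1 + t)
        else if k ≤ n then 2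
        else if k = n + 1 then ENNReal.ofReal (1 + t) else 0 := by
  have hval : (testF t n + testG t n) k
      = if k = 0 then ((1 + t : ℝ) : ℂ) else if k ≤ n then 2
        else if k = n + 1 then ((1 + t : ℝ) : ℂ) else 0 := by
    simp only [Pi.add_apply, testF, testG]
    by_cases h1 : k = 0
    · subst h1
      simp only [Nat.zero_le, if_pos, if_pos rfl]
      push_cast
      ring
    · by_cases h2 : k ≤ n
      · rw [if_pos h2, if_neg h1, if_pos (by omega), if_neg h1, if_pos h2]
        norm_num
    
      · by_cases h3 : k = n + 1
        · rw [if_neg h2, if_pos h3, if_neg h1, if_pos (by omega), if_neg h1, if_neg h2,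
            if_pos h3]
          push_cast
          ring
        · rw [if_neg h2, if_neg h3, if_neg h1, if_neg (by omega), if_neg h1, if_neg h2,
            if_neg h3]
          norm_num
  rw [hval]
  by_cases h1 : k = 0
  · rw [if_pos h1, if_pos h1, Complex.norm_real, Real.norm_eq_abs, abs_of_pos (by linarith : (0:ℝ) < 1 + t)]
  · by_cases h2 : k ≤ n
    · rw [if_neg h1, if_pos h2, if_neg h1, if_pos h2]
      simp
    · by_cases h3 : k = n + 1
      · rw [if_neg h1, if_neg h2, if_pos h3, if_neg h1, if_neg h2, if_pos h3,
          Complex.norm_real, Real.norm_eq_abs, abs_of_pos (by linarith : (0:ℝ) < 1 + t)]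
      · rw [if_neg h1, if_neg h2, if_neg h3, if_neg h1, if_neg h2, if_neg h3]
        simp

lemma testF_count (ht0 : 0 < t) (ht1 : t < 1) (s : ℝ≥0∞) :
    Measure.count {k : ℕ | s < ENNReal.ofReal ‖testF t n k‖}
      = if s < ENNReal.ofReal t then (((n + 1) + 1 : ℕ) : ℝ≥0∞)
        else if s < 1 then ((n + 1 : ℕ) : ℝ≥0∞) else 0 := by
  have htlt1 : ENNReal.ofReal t < 1 := by
    rw [← ENNReal.ofReal_one]
    exact ENNReal.ofReal_lt_ofReal_iff_of_nonneg ht0.le |>.2 ht1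
  by_cases h1 : s < ENNReal.ofReal t
  · rw [if_pos h1]
    have hset : {k : ℕ | s < ENNReal.ofReal ‖testF t n k‖} = Set.Iio (n + 2) := by
      ext k
      rw [Set.mem_setOf_eq, testF_norm ht0, Set.mem_Iio]
      by_cases hk1 : k ≤ n
      · simp only [if_pos hk1]
        exact ⟨fun _ => by omega, fun _ => lt_trans h1 htlt1⟩
      · by_cases hk2 : k = n + 1
        · simp only [if_neg hk1, if_pos hk2]
          exact ⟨fun _ => by omega, fun _ => h1⟩
        · simp only [if_neg hk1, if_neg hk2]
          exact ⟨fun h => absurd h (by simp), fun h => absurd h (by omega)⟩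
    rw [hset, count_Iio]
  · rw [if_neg h1]
    by_cases h2 : s < 1
    · rw [if_pos h2]
      have hset : {k : ℕ | s < ENNReal.ofReal ‖testF t n k‖} = Set.Iio (n + 1) := by
        ext k
        rw [Set.mem_setOf_eq, testF_norm ht0, Set.mem_Iio]
        by_cases hk1 : k ≤ n
        · simp only [if_pos hk1]
          exact ⟨fun _ => by omega, fun _ => h2⟩
        · by_cases hk2 : k = n + 1
          · simp only [if_neg hk1, if_pos hk2]
            exact ⟨fun h => absurd h h1, fun h => absurd h (by omega)⟩
          · simp only [if_neg hk1, if_neg hk2]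
            exact ⟨fun h => absurd h (by simp), fun h => absurd h (by omega)⟩
      rw [hset, count_Iio]
    · rw [if_neg h2]
      have hset : {k : ℕ | s < ENNReal.ofReal ‖testF t n k‖} = (∅ : Set ℕ) := by
        ext k
        rw [Set.mem_setOf_eq, testF_norm ht0]
        simp only [Set.mem_empty_iff_false, iff_false]
        by_cases hk1 : k ≤ n
        · simp only [if_pos hk1]; exact h2
        · by_cases hk2 : k = n + 1
          · simp only [if_neg hk1, if_pos hk2]
            exact fun h => h1 h
          · simp only [if_neg hk1, if_neg hk2]; simp
      rw [hset]
      simp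

lemma testG_count (ht0 : 0 < t) (ht1 : t < 1) (s : ℝ≥0∞) :
    Measure.count {k : ℕ | s < ENNReal.ofReal ‖testG t n k‖}
      = if s < ENNReal.ofReal t then (((n + 1) + 1 : ℕ) : ℝ≥0∞)
        else if s < 1 then ((n + 1 : ℕ) : ℝ≥0∞) else 0 := by
  have htlt1 : ENNReal.ofReal t < 1 := by
    rw [← ENNReal.ofReal_one]
    exact ENNReal.ofReal_lt_ofReal_iff_of_nonneg ht0.le |>.2 ht1
  by_cases h1 : s < ENNReal.ofReal t
  · rw [if_pos h1]
    have hset : {k : ℕ | s < ENNReal.ofReal ‖testG t n k‖} = Set.Iio (n + 2) := by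
      ext k
      rw [Set.mem_setOf_eq, testG_norm ht0, Set.mem_Iio]
      by_cases hk1 : k = 0
      · simp only [if_pos hk1]
        exact ⟨fun _ => by omega, fun _ => h1⟩
      · by_cases hk2 : k ≤ n + 1
        · simp only [if_neg hk1, if_pos hk2]
          exact ⟨fun _ => by omega, fun _ => lt_trans h1 htlt1⟩
        · simp only [if_neg hk1, if_neg hk2]
          exact ⟨fun h => absurd h (by simp), fun h => absurd h (by omega)⟩
    rw [hset, count_Iio]
  · rw [if_neg h1]
    by_cases h2 : s < 1
    · rw [if_pos h2]
      have hset : {k : ℕ | s < ENNReal.ofReal ‖testG t n k‖}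
          = ↑(Finset.Icc 1 (n + 1)) := by
        ext k
        rw [Set.mem_setOf_eq, testG_norm ht0, Finset.coe_Icc, Set.mem_Icc]
        by_cases hk1 : k = 0
        · simp only [if_pos hk1]
          exact ⟨fun h => absurd h h1, fun h => absurd h (by omega)⟩
        · by_cases hk2 : k ≤ n + 1
          · simp only [if_neg hk1, if_pos hk2]
            exact ⟨fun _ => by omega, fun _ => h2⟩
          · simp only [if_neg hk1, if_neg hk2]
            exact ⟨fun h => absurd h (by simp), fun h => absurd h (by omega)⟩
      rw [hset, Measure.count_apply_finset]
      simp
    · rw [if_neg h2]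
      have hset : {k : ℕ | s < ENNReal.ofReal ‖testG t n k‖} = (∅ : Set ℕ) := by
        ext k
        rw [Set.mem_setOf_eq, testG_norm ht0]
        simp only [Set.mem_empty_iff_false, iff_false]
        by_cases hk1 : k = 0
        · simp only [if_pos hk1]
          exact fun h => h1 h
        · by_cases hk2 : k ≤ n + 1
          · simp only [if_neg hk1, if_pos hk2]; exact h2
          · simp only [if_neg hk1, if_neg hk2]; simp
      rw [hset]
      simp

lemma testFG_count (ht0 : 0 < t) (ht1 : t < 1) (s : ℝ≥0∞) :
    Measure.count {k : ℕ | s < ENNReal.ofReal ‖(testF t n + testG t n) k‖}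
      = if s < ENNReal.ofReal (1 + t) then ((n + 2 : ℕ) : ℝ≥0∞)
        else if s < 2 then ((n : ℕ) : ℝ≥0∞) else 0 := by
  have htlt2 : ENNReal.ofReal (1 + t) < 2 := by
    rw [show (2 : ℝ≥0∞) = ENNReal.ofReal 2 by simp]
    exact ENNReal.ofReal_lt_ofReal_iff_of_nonneg (by linarith) |>.2 (by linarith)
  by_cases h1 : s < ENNReal.ofReal (1 + t)
  · rw [if_pos h1]
    have hset : {k : ℕ | s < ENNReal.ofReal ‖(testF t n + testG t n) k‖}
        = Set.Iio (n + 2) := by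
      ext k
      rw [Set.mem_setOf_eq, testFG_norm ht0, Set.mem_Iio]
      by_cases hk1 : k = 0
      · simp only [if_pos hk1]
        exact ⟨fun _ => by omega, fun _ => h1⟩
      · by_cases hk2 : k ≤ n
        · simp only [if_neg hk1, if_pos hk2]
          exact ⟨fun _ => by omega, fun _ => lt_trans h1 htlt2⟩
        · by_cases hk3 : k = n + 1
          · simp only [if_neg hk1, if_neg hk2, if_pos hk3]
            exact ⟨fun _ => by omega, fun _ => h1⟩
          · simp only [if_neg hk1, if_neg hk2, if_neg hk3]
            exact ⟨fun h => absurd h (by simp), fun h => absurd h (by omega)⟩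
    rw [hset, count_Iio]
  · rw [if_neg h1]
    by_cases h2 : s < 2
    · rw [if_pos h2]
      have hset : {k : ℕ | s < ENNReal.ofReal ‖(testF t n + testG t n) k‖}
          = ↑(Finset.Icc 1 n) := by
        ext k
        rw [Set.mem_setOf_eq, testFG_norm ht0, Finset.coe_Icc, Set.mem_Icc]
        by_cases hk1 : k = 0
        · simp only [if_pos hk1]
          exact ⟨fun h => absurd h h1, fun h => absurd h (by omega)⟩
        · by_cases hk2 : k ≤ n
          · simp only [if_neg hk1, if_pos hk2]
            exact ⟨fun _ => by omega, fun _ => h2⟩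
          · by_cases hk3 : k = n + 1
            · simp only [if_neg hk1, if_neg hk2, if_pos hk3]
              exact ⟨fun h => absurd h h1, fun h => absurd h (by omega)⟩
            · simp only [if_neg hk1, if_neg hk2, if_neg hk3]
              exact ⟨fun h => absurd h (by simp), fun h => absurd h (by omega)⟩
      rw [hset, Measure.count_apply_finset]
      simp
    · rw [if_neg h2]
      have hset : {k : ℕ | s < ENNReal.ofReal ‖(testF t n + testG t n) k‖}
          = (∅ : Set ℕ) := by
        ext k
        rw [Set.mem_setOf_eq, testFG_norm ht0]
        simp only [Set.mem_empty_iff_false, iff_false]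
        by_cases hk1 : k = 0
        · simp only [if_pos hk1]
          exact fun h => h1 h
        · by_cases hk2 : k ≤ n
          · simp only [if_neg hk1, if_pos hk2]; exact h2
          · by_cases hk3 : k = n + 1
            · simp only [if_neg hk1, if_neg hk2, if_pos hk3]
              exact fun h => h1 h
            · simp only [if_neg hk1, if_neg hk2, if_neg hk3]; simp

      rw [hset]
      simp

end tests

section dnorms

variable {p : ℝ} {Ω : ℕ → ℝ} {t : ℝ}

lemma dnorm_testF (hp : 1 ≤ p) (hΩ : ∀ m, 0 ≤ Ω m) (ht0 : 0 < t) (ht1 : t < 1) (n : ℕ) :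
    dNormC' Ω p (testF t n) = ENNReal.ofReal
      ((∑ j ∈ Finset.range (n + 1), Ω j) + t ^ p * Ω (n + 1)) ^ (1 / p) := by
  have hp0 : 0 < p := lt_of_lt_of_le one_pos hp
  have h2b := rearrE_two_block (u := (1 : ℝ≥0∞)) (v := ENNReal.ofReal t) (m := n + 1) (r := 1)
    (ENNReal.ofReal_le_one.2 ht1.le) (ENNReal.ofReal_pos.2 ht0) (testF_count ht0 ht1)
  have hterm : ∀ j, rearrSeqC' (testF t n) j ^ p * ENNReal.ofReal (Ω j)
      = if j < n + 1 then ENNReal.ofReal (Ω j)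
        else if j = n + 1 then ENNReal.ofReal (t ^ p * Ω (n + 1)) else 0 := by
    intro j
    rw [rearrSeqC'_eq]
    by_cases h1 : j < n + 1
    · rw [if_pos h1, h2b.1 j h1, ENNReal.one_rpow, one_mul]
    · by_cases h2 : j = n + 1
      · rw [if_neg h1, if_pos h2, h2]
        rw [h2b.2.1 (n + 1) le_rfl (by omega)]
        rw [ENNReal.ofReal_rpow_of_nonneg ht0.le hp0.le,
          ← ENNReal.ofReal_mul (Real.rpow_nonneg ht0.le p)]
      · rw [if_neg h1, if_neg h2, h2b.2.2 j (by omega), ENNReal.zero_rpow_of_pos hp0,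
          zero_mul]
  rw [dNormC']
  congr 1
  rw [tsum_eq_sum (s := Finset.range (n + 2)) (fun j hj => by
    rw [hterm j, if_neg (by simp at hj; omega), if_neg (by simp at hj; omega)])]
  calc ∑ j ∈ Finset.range (n + 2), rearrSeqC' (testF t n) j ^ p * ENNReal.ofReal (Ω j)
      = (∑ j ∈ Finset.range (n + 1), ENNReal.ofReal (Ω j))
          + ENNReal.ofReal (t ^ p * Ω (n + 1)) := by
        rw [Finset.sum_range_succ]
        congr 1
        · refine Finset.sum_congr rfl fun j hj => ?_
          rw [hterm j, if_pos (Finset.mem_range.1 hj)]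
        · rw [hterm (n + 1), if_neg (by omega), if_pos rfl]
    _ = ENNReal.ofReal ((∑ j ∈ Finset.range (n + 1), Ω j) + t ^ p * Ω (n + 1)) := by
        rw [← ENNReal.ofReal_sum_of_nonneg (fun j _ => hΩ j),
          ← ENNReal.ofReal_add (Finset.sum_nonneg fun j _ => hΩ j)
            (mul_nonneg (Real.rpow_nonneg ht0.le p) (hΩ (n + 1)))]

lemma dnorm_testG (hp : 1 ≤ p) (hΩ : ∀ m, 0 ≤ Ω m) (ht0 : 0 < t) (ht1 : t < 1) (n : ℕ) :
    dNormC' Ω p (testG t n) = ENNReal.ofReal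
      ((∑ j ∈ Finset.range (n + 1), Ω j) + t ^ p * Ω (n + 1)) ^ (1 / p) := by
  have hp0 : 0 < p := lt_of_lt_of_le one_pos hp
  have h2b := rearrE_two_block (u := (1 : ℝ≥0∞)) (v := ENNReal.ofReal t) (m := n + 1) (r := 1)
    (ENNReal.ofReal_le_one.2 ht1.le) (ENNReal.ofReal_pos.2 ht0) (testG_count ht0 ht1)
  have hterm : ∀ j, rearrSeqC' (testG t n) j ^ p * ENNReal.ofReal (Ω j)
      = if j < n + 1 then ENNReal.ofReal (Ω j)
        else if j = n + 1 then ENNReal.ofReal (t ^ p * Ω (n + 1)) else 0 := by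
    intro j
    rw [rearrSeqC'_eq]
    by_cases h1 : j < n + 1
    · rw [if_pos h1, h2b.1 j h1, ENNReal.one_rpow, one_mul]
    · by_cases h2 : j = n + 1
      · rw [if_neg h1, if_pos h2, h2]
        rw [h2b.2.1 (n + 1) le_rfl (by omega)]
        rw [ENNReal.ofReal_rpow_of_nonneg ht0.le hp0.le,
          ← ENNReal.ofReal_mul (Real.rpow_nonneg ht0.le p)]
      · rw [if_neg h1, if_neg h2, h2b.2.2 j (by omega), ENNReal.zero_rpow_of_pos hp0,
          zero_mul]
  rw [dNormC']
  congr 1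
  rw [tsum_eq_sum (s := Finset.range (n + 2)) (fun j hj => by
    rw [hterm j, if_neg (by simp at hj; omega), if_neg (by simp at hj; omega)])]
  calc ∑ j ∈ Finset.range (n + 2), rearrSeqC' (testG t n) j ^ p * ENNReal.ofReal (Ω j)
      = (∑ j ∈ Finset.range (n + 1), ENNReal.ofReal (Ω j))
          + ENNReal.ofReal (t ^ p * Ω (n + 1)) := by
        rw [Finset.sum_range_succ]
        congr 1
        · refine Finset.sum_congr rfl fun j hj => ?_
          rw [hterm j, if_pos (Finset.mem_range.1 hj)]
        · rw [hterm (n + 1), if_neg (by omega), if_pos rfl]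
    _ = ENNReal.ofReal ((∑ j ∈ Finset.range (n + 1), Ω j) + t ^ p * Ω (n + 1)) := by
        rw [← ENNReal.ofReal_sum_of_nonneg (fun j _ => hΩ j),
          ← ENNReal.ofReal_add (Finset.sum_nonneg fun j _ => hΩ j)
            (mul_nonneg (Real.rpow_nonneg ht0.le p) (hΩ (n + 1)))]

lemma dnorm_testFG (hp : 1 ≤ p) (hΩ : ∀ m, 0 ≤ Ω m) (ht0 : 0 < t) (ht1 : t < 1) (n : ℕ) :
    dNormC' Ω p (testF t n + testG t n) = ENNReal.ofReal
      ((∑ j ∈ Finset.range n, 2 ^ p * Ω j)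
        + ((1 + t) ^ p * Ω n + (1 + t) ^ p * Ω (n + 1))) ^ (1 / p) := by
  have hp0 : 0 < p := lt_of_lt_of_le one_pos hp
  have huv : ENNReal.ofReal (1 + t) ≤ 2 := by
    rw [show (2 : ℝ≥0∞) = ENNReal.ofReal 2 by simp]
    exact ENNReal.ofReal_le_ofReal (by linarith)
  have h2b := rearrE_two_block (u := (2 : ℝ≥0∞)) (v := ENNReal.ofReal (1 + t)) (m := n)
    (r := 2) huv (ENNReal.ofReal_pos.2 (by linarith)) (testFG_count ht0 ht1)
  have h2p : (2 : ℝ≥0∞) ^ p = ENNReal.ofReal (2 ^ p) := by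
    rw [show (2 : ℝ≥0∞) = ENNReal.ofReal 2 by simp,
      ENNReal.ofReal_rpow_of_nonneg (by norm_num) hp0.le]
  have hterm : ∀ j, rearrSeqC' (testF t n + testG t n) j ^ p * ENNReal.ofReal (Ω j)
      = if j < n then ENNReal.ofReal (2 ^ p * Ω j)
        else if j = n ∨ j = n + 1 then ENNReal.ofReal ((1 + t) ^ p * Ω j) else 0 := by
    intro j
    rw [rearrSeqC'_eq]
    by_cases h1 : j < n
    · rw [if_pos h1, h2b.1 j h1, h2p, ← ENNReal.ofReal_mul (Real.rpow_nonneg (by norm_num) p)]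
    · by_cases h2 : j = n ∨ j = n + 1
      · rw [if_neg h1, if_pos h2]
        rw [h2b.2.1 j (by omega) (by omega)]
        rw [ENNReal.ofReal_rpow_of_nonneg (by linarith) hp0.le,
          ← ENNReal.ofReal_mul (Real.rpow_nonneg (by linarith) p)]
      · rw [if_neg h1, if_neg h2, h2b.2.2 j (by omega), ENNReal.zero_rpow_of_pos hp0,
          zero_mul]
  rw [dNormC']
  congr 1
  rw [tsum_eq_sum (s := Finset.range (n + 2)) (fun j hj => by
    rw [hterm j, if_neg (by simp at hj; omega), if_neg (by simp at hj; omega)])]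
  calc ∑ j ∈ Finset.range (n + 2), rearrSeqC' (testF t n + testG t n) j ^ p
        * ENNReal.ofReal (Ω j)
      = (∑ j ∈ Finset.range n, ENNReal.ofReal (2 ^ p * Ω j))
          + (ENNReal.ofReal ((1 + t) ^ p * Ω n)
            + ENNReal.ofReal ((1 + t) ^ p * Ω (n + 1))) := by
        rw [Finset.sum_range_succ, Finset.sum_range_succ, add_assoc]
        refine congrArg₂ (· + ·) ?_ (congrArg₂ (· + ·) ?_ ?_)
        · refine Finset.sum_congr rfl fun j hj => ?_
          rw [hterm j, if_pos (Finset.mem_range.1 hj)]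
        · rw [hterm n, if_neg (by omega), if_pos (Or.inl rfl)]
        · rw [hterm (n + 1), if_neg (by omega), if_pos (Or.inr rfl)]
    _ = ENNReal.ofReal ((∑ j ∈ Finset.range n, 2 ^ p * Ω j)
          + ((1 + t) ^ p * Ω n + (1 + t) ^ p * Ω (n + 1))) := by
        have hA : ∀ j, (0:ℝ) ≤ 2 ^ p * Ω j :=
          fun j => mul_nonneg (Real.rpow_nonneg (by norm_num) p) (hΩ j)
        have hB : ∀ j, (0:ℝ) ≤ (1 + t) ^ p * Ω j :=
          fun j => mul_nonneg (Real.rpow_nonneg (by linarith) p) (hΩ j)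
        rw [← ENNReal.ofReal_sum_of_nonneg (fun j _ => hA j),
          ← ENNReal.ofReal_add (hB n) (hB (n + 1)),
          ← ENNReal.ofReal_add (Finset.sum_nonneg fun j _ => hA j) (add_nonneg (hB n) (hB (n + 1)))]

end dnorms

section bern

lemma bern_low {a b q : ℝ} (hb : 0 < b) (hab : b ≤ a) (hq : 1 ≤ q) :
    q * b ^ (q - 1) * (a - b) ≤ a ^ q - b ^ q := by
  have hs : -1 ≤ a / b - 1 := by
    have : (1 : ℝ) ≤ a / b := (one_le_div hb).2 hab
    linarith
  have h := one_add_mul_self_le_rpow_one_add hs hq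
  rw [show (1 : ℝ) + (a / b - 1) = a / b by ring] at h
  have hbq : 0 < b ^ q := Real.rpow_pos_of_pos hb q
  have h2 := mul_le_mul_of_nonneg_right h hbq.le
  rw [Real.div_rpow (le_trans hb.le hab) hb.le, div_mul_cancel₀ _ hbq.ne'] at h2
  have e1 : b ^ (q - 1) = b ^ q / b := by
    rw [Real.rpow_sub hb, Real.rpow_one]
  have e2 : (1 + q * (a / b - 1)) * b ^ q = b ^ q + q * (b ^ q / b) * (a - b) := by
    field_simp
  rw [e2] at h2
  rw [e1]
  linarith

lemma bern_high {a b q : ℝ} (hb : 0 ≤ b) (hab : b ≤ a) (ha : 0 < a) (hq : 1 ≤ q) :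
    a ^ q - b ^ q ≤ q * a ^ (q - 1) * (a - b) := by
  have hs : -1 ≤ b / a - 1 := by
    have : (0 : ℝ) ≤ b / a := div_nonneg hb ha.le
    linarith
  have h := one_add_mul_self_le_rpow_one_add hs hq
  rw [show (1 : ℝ) + (b / a - 1) = b / a by ring] at h
  have haq : 0 < a ^ q := Real.rpow_pos_of_pos ha q
  have h2 := mul_le_mul_of_nonneg_right h haq.le
  rw [Real.div_rpow hb ha.le, div_mul_cancel₀ _ haq.ne'] at h2
  have e1 : a ^ (q - 1) = a ^ q / a := by
    rw [Real.rpow_sub ha, Real.rpow_one]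
  have e2 : (1 + q * (b / a - 1)) * a ^ q = a ^ q - q * (a ^ q / a) * (a - b) := by
    field_simp
    ring
  rw [e2] at h2
  rw [e1]
  linarith

end bern

section necessity

variable {p : ℝ} {Ω : ℕ → ℝ}

lemma key_ineq (hp : 1 ≤ p) (hΩ : ∀ m, 0 ≤ Ω m) {t : ℝ} (ht0 : 0 < t) (ht1 : t < 1) (n : ℕ)
    (htri : dNormC' Ω p (testF t n + testG t n)
      ≤ dNormC' Ω p (testF t n) + dNormC' Ω p (testG t n)) :
    ((1 + t) ^ p - (2 * t) ^ p) * Ω (n + 1) ≤ (2 ^ p - (1 + t) ^ p) * Ω n := by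
  have hp0 : 0 < p := lt_of_lt_of_le one_pos hp
  set A : ℝ := (∑ j ∈ Finset.range (n + 1), Ω j) + t ^ p * Ω (n + 1) with hA
  set B : ℝ := (∑ j ∈ Finset.range n, 2 ^ p * Ω j)
    + ((1 + t) ^ p * Ω n + (1 + t) ^ p * Ω (n + 1)) with hB
  have hA0 : 0 ≤ A := by
    rw [hA]
    exact add_nonneg (Finset.sum_nonneg fun j _ => hΩ j)
      (mul_nonneg (Real.rpow_nonneg ht0.le p) (hΩ (n + 1)))
  rw [dnorm_testF hp hΩ ht0 ht1 n, dnorm_testG hp hΩ ht0 ht1 n,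
    dnorm_testFG hp hΩ ht0 ht1 n, ← two_mul] at htri
  have h2 := ENNReal.rpow_le_rpow htri hp0.le
  rw [← ENNReal.rpow_mul, one_div_mul_cancel hp0.ne', ENNReal.rpow_one,
    ENNReal.mul_rpow_of_nonneg _ _ hp0.le, ← ENNReal.rpow_mul, one_div_mul_cancel hp0.ne',
    ENNReal.rpow_one] at h2
  have h2p : (2 : ℝ≥0∞) ^ p = ENNReal.ofReal (2 ^ p) := by
    rw [show (2 : ℝ≥0∞) = ENNReal.ofReal 2 by simp,
      ENNReal.ofReal_rpow_of_nonneg (by norm_num) hp0.le]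
  rw [h2p, ← ENNReal.ofReal_mul (Real.rpow_nonneg (by norm_num) p)] at h2
  have h3 : B ≤ 2 ^ p * A := (ENNReal.ofReal_le_ofReal_iff
    (mul_nonneg (Real.rpow_nonneg (by norm_num) p) hA0)).1 h2
  rw [hA, hB] at h3
  rw [Finset.sum_range_succ] at h3
  have hms : ∑ j ∈ Finset.range n, 2 ^ p * Ω j = 2 ^ p * ∑ j ∈ Finset.range n, Ω j :=
    (Finset.mul_sum _ _ _).symm
  rw [hms] at h3
  have h2t : (2 * t) ^ p = 2 ^ p * t ^ p := Real.mul_rpow (by norm_num) ht0.le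
  rw [h2t]
  linarith [h3]

lemma step_ineq (hp : 1 ≤ p) (hΩ : ∀ m, 0 ≤ Ω m)
    (htri : ∀ f g : ℕ → ℂ, dNormC' Ω p (f + g) ≤ dNormC' Ω p f + dNormC' Ω p g)
    (n : ℕ) {t : ℝ} (ht0 : 0 < t) (ht1 : t < 1) :
    t ^ (p - 1) * Ω (n + 1) ≤ Ω n := by
  have hp0 : 0 < p := lt_of_lt_of_le one_pos hp
  have hk := key_ineq hp hΩ ht0 ht1 n (htri (testF t n) (testG t n))
  have hb1 : p * (2 * t) ^ (p - 1) * (1 - t) ≤ (1 + t) ^ p - (2 * t) ^ p := by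
    have := bern_low (a := 1 + t) (b := 2 * t) (by linarith) (by linarith) hp
    calc p * (2 * t) ^ (p - 1) * (1 - t)
        = p * (2 * t) ^ (p - 1) * ((1 + t) - 2 * t) := by ring_nf
      _ ≤ (1 + t) ^ p - (2 * t) ^ p := this
  have hb2 : 2 ^ p - (1 + t) ^ p ≤ p * 2 ^ (p - 1) * (1 - t) := by
    have := bern_high (a := 2) (b := 1 + t) (by linarith) (by linarith) (by norm_num) hp
    calc 2 ^ p - (1 + t) ^ p ≤ p * 2 ^ (p - 1) * (2 - (1 + t)) := this
      _ = p * 2 ^ (p - 1) * (1 - t) := by ring_nf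
  have hchain : (p * 2 ^ (p - 1) * (1 - t)) * (t ^ (p - 1) * Ω (n + 1))
      ≤ (p * 2 ^ (p - 1) * (1 - t)) * Ω n := by
    have h2t : (2 * t) ^ (p - 1) = 2 ^ (p - 1) * t ^ (p - 1) :=
      Real.mul_rpow (by norm_num) ht0.le
    calc (p * 2 ^ (p - 1) * (1 - t)) * (t ^ (p - 1) * Ω (n + 1))
        = (p * (2 * t) ^ (p - 1) * (1 - t)) * Ω (n + 1) := by rw [h2t]; ring
      _ ≤ ((1 + t) ^ p - (2 * t) ^ p) * Ω (n + 1) :=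
          mul_le_mul_of_nonneg_right hb1 (hΩ (n + 1))
      _ ≤ (2 ^ p - (1 + t) ^ p) * Ω n := hk
      _ ≤ (p * 2 ^ (p - 1) * (1 - t)) * Ω n :=
          mul_le_mul_of_nonneg_right hb2 (hΩ n)
  have hpos : 0 < p * 2 ^ (p - 1) * (1 - t) := by
    have h2pos : (0:ℝ) < 2 ^ (p - 1) := Real.rpow_pos_of_pos (by norm_num) _
    have : (0:ℝ) < 1 - t := by linarith
    positivity
  exact le_of_mul_le_mul_left hchain hpos

open Filter in
lemma necessity (hp : 1 ≤ p) (hΩ : ∀ m, 0 ≤ Ω m)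
    (htri : ∀ f g : ℕ → ℂ, dNormC' Ω p (f + g) ≤ dNormC' Ω p f + dNormC' Ω p g) (n : ℕ) :
    Ω (n + 1) ≤ Ω n := by
  have hp0 : 0 < p := lt_of_lt_of_le one_pos hp
  have h1 : Tendsto (fun k : ℕ => (1 - 1 / ((k : ℝ) + 2))) atTop (nhds 1) := by
    have h0 : Tendsto (fun k : ℕ => 1 / ((k : ℝ) + 2)) atTop (nhds 0) := by
      have hh : Tendsto (fun k : ℕ => ((k : ℝ) + 2)) atTop atTop :=
        Filter.tendsto_atTop_add_const_right _ 2 tendsto_natCast_atTop_atTop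
      simpa [one_div, Pi.inv_def] using hh.inv_tendsto_atTop
    have := h0.const_sub (1 : ℝ)
    simpa using this
  have h2 : Tendsto (fun k : ℕ => (1 - 1 / ((k : ℝ) + 2)) ^ (p - 1) * Ω (n + 1)) atTop
      (nhds (Ω (n + 1))) := by
    have hc : ContinuousAt (fun x : ℝ => x ^ (p - 1)) 1 :=
      Real.continuousAt_rpow_const 1 (p - 1) (Or.inl one_ne_zero)
    have h3 := (hc.tendsto.comp h1).mul_const (Ω (n + 1))
    simpa [Real.one_rpow] using h3
  refine le_of_tendsto h2 (Filter.Eventually.of_forall fun k => ?_)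
  have hk2 : (0:ℝ) < (k : ℝ) + 2 := by positivity
  refine step_ineq hp hΩ htri n ?_ ?_
  · have : 1 / ((k : ℝ) + 2) ≤ 1 / 2 := by
      apply div_le_div_of_nonneg_left <;> try linarith
    linarith [this]
  · have : 0 < 1 / ((k : ℝ) + 2) := by positivity
    linarith

end necessity

/-- For `1 ≤ p < ∞` and `Ω ⊆ [0,∞)`: the functional `‖·‖_{d(Ω,p)}` satisfies the triangle
inequality for all complex sequences only if `Ω` is nonincreasing; conversely, if `Ω` is
nonincreasing it is a norm (triangle inequality and homogeneity). -/
theorem stmt16 (p : ℝ) (hp : 1 ≤ p) (Ω : ℕ → ℝ) (hΩ : ∀ n, 0 ≤ Ω n) :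
    ((∀ f g : ℕ → ℂ, dNormC Ω p (f + g) ≤ dNormC Ω p f + dNormC Ω p g) →
      ∀ n : ℕ, Ω (n + 1) ≤ Ω n) ∧
    ((∀ n : ℕ, Ω (n + 1) ≤ Ω n) →
      (∀ f g : ℕ → ℂ, dNormC Ω p (f + g) ≤ dNormC Ω p f + dNormC Ω p g) ∧
      (∀ (f : ℕ → ℂ) (c : ℂ), dNormC Ω p (c • f) = ENNReal.ofReal ‖c‖ * dNormC Ω p f)) := by
  constructor
  · intro htri n
    exact necessity hp hΩ htri n
  · intro hmono
    exact ⟨fun f g => dNormC'_triangle hp hmono f g, fun f c => dNormC'_smul hp f c⟩
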